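/- One-bit full adder verification: the four-qubit operator |x_1x_2x_3x_4⟩ ↦ (1/2) ∑_{y_1,y_2∈Z_2} e^{2πi·y_1(y_2 + x_1x_2 + x_1x_3 + x_2x_3 + x_4)/2} |x_1, x_1⊕x_2, x_1⊕x_2⊕x_3, y_2⟩ equals the reversible full adder |x_1x_2x_3x_4⟩ ↦ |x_1, x_1⊕x_2, x_1⊕x_2⊕x_3, x_1x_2 ⊕ x_1x_3 ⊕ x_2x_3 ⊕ x_4⟩. -/

import Mathlib

/-- Four-qubit computational basis state `|z₁z₂z₃z₄⟩`. -/
noncomputable def ket4 (z : ZMod 2 × ZMod 2 × ZMod 2 × ZMod 2) :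
    ZMod 2 × ZMod 2 × ZMod 2 × ZMod 2 → ℂ := fun w => if w = z then 1 else 0

/-- `e^{2πi t}` for rational `t`. -/
noncomputable def ph (t : ℚ) : ℂ := Complex.exp (2 * (Real.pi : ℂ) * Complex.I * (t : ℂ))

lemma ph_half (n : ℕ) : ph ((n : ℚ) / 2) = (-1 : ℂ) ^ n := by
  have : (2 * (Real.pi : ℂ) * Complex.I * (((n : ℚ) / 2 : ℚ) : ℂ)) = n * (Real.pi * Complex.I) := by
    push_cast; ring
  rw [ph, this, Complex.exp_nat_mul, Complex.exp_pi_mul_I]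

lemma sum_zmod2 {M : Type*} [AddCommMonoid M] (f : ZMod 2 → M) :
    ∑ x : ZMod 2, f x = f 0 + f 1 := by
  show ∑ x : Fin 2, f x = _
  exact Fin.sum_univ_two (fun i : Fin 2 => f i)

/-- one-bit full adder verification: the four-qubit operator
`|x₁x₂x₃x₄⟩ ↦ (1/2) ∑_{y₁,y₂} e^{2πi y₁(y₂ + x₁x₂ + x₁x₃ + x₂x₃ + x₄)/2}
  |x₁, x₁⊕x₂, x₁⊕x₂⊕x₃, y₂⟩`
equals the reversible full adder
`|x₁x₂x₃x₄⟩ ↦ |x₁, x₁⊕x₂, x₁⊕x₂⊕x₃, x₁x₂⊕x₁x₃⊕x₂x₃⊕x₄⟩`. -/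
theorem stmt16 :
    ∀ x1 x2 x3 x4 : ZMod 2,
      ((1 : ℂ) / 2) •
          ∑ y1 : ZMod 2, ∑ y2 : ZMod 2,
            ph (((y1.val * (y2.val + x1.val * x2.val + x1.val * x3.val
                  + x2.val * x3.val + x4.val) : ℕ) : ℚ) / 2) •
              ket4 (x1, x1 + x2, x1 + x2 + x3, y2)
        = ket4 (x1, x1 + x2, x1 + x2 + x3, x1 * x2 + x1 * x3 + x2 * x3 + x4) := by
  intro x1 x2 x3 x4
  set c : ℕ := x1.val * x2.val + x1.val * x3.val + x2.val * x3.val + x4.val with hc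
  have hb : x1 * x2 + x1 * x3 + x2 * x3 + x4 = (c : ZMod 2) := by
    rw [hc]; push_cast [ZMod.natCast_val, ZMod.cast_id]; rfl
  rw [hb]
  simp only [sum_zmod2, ph_half, ZMod.val_zero, ZMod.val_one, zero_mul, one_mul, zero_add,
    pow_zero, one_smul]
  have he : 1 + x1.val * x2.val + x1.val * x3.val + x2.val * x3.val + x4.val = 1 + c := by
    rw [hc]; ring
  rw [he]
  rcases Nat.even_or_odd c with h | h
  · have h1 : ((-1 : ℂ)) ^ c = 1 := h.neg_one_pow
    have h2 : ((-1 : ℂ)) ^ (1 + c) = -1 := by rw [pow_add]; simp [h1]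
    have h3 : ((c : ℕ) : ZMod 2) = 0 :=
      (ZMod.natCast_eq_zero_iff c 2).mpr h.two_dvd
    rw [h1, h2, h3]
    module
  · have h1 : ((-1 : ℂ)) ^ c = -1 := h.neg_one_pow
    have h2 : ((-1 : ℂ)) ^ (1 + c) = 1 := by rw [pow_add]; simp [h1]
    have h3 : ((c : ℕ) : ZMod 2) = 1 := by
      obtain ⟨k, hk⟩ := h
      rw [hk]
      push_cast
      simp
      left
      decide
    rw [h1, h2, h3]
    module
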